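/- For every connected graph G on n ≥ 4 vertices, π(G) + ∂ₙ(G) ≤ 0, where ∂ₙ is the smallest eigenvalue of the distance matrix, with equality if and only if G is the complete graph K_n. -/

import Mathlib

open SimpleGraph Finset

/-- The transmission of a vertex: the sum of distances from `v` to all other vertices. -/
noncomputable def transmission {n : ℕ} (G : SimpleGraph (Fin n)) (v : Fin n) : ℕ :=
  ∑ u, G.dist v u

/-- The proximity: the minimum average distance from a vertex to all others. -/
noncomputable def proximity {n : ℕ} (G : SimpleGraph (Fin n)) : ℝ :=
  sInf {x : ℝ | ∃ v : Fin n, x = transmission G v} / (n - 1)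

/-- The remoteness: the maximum average distance from a vertex to all others. -/
noncomputable def remoteness {n : ℕ} (G : SimpleGraph (Fin n)) : ℝ :=
  sSup {x : ℝ | ∃ v : Fin n, x = transmission G v} / (n - 1)

/-- The distance matrix of a graph. -/
noncomputable def distMatrix {n : ℕ} (G : SimpleGraph (Fin n)) : Matrix (Fin n) (Fin n) ℝ :=
  fun u v => (G.dist u v : ℝ)

/-- The largest distance eigenvalue ∂₁. -/
noncomputable def maxDistEig {n : ℕ} (G : SimpleGraph (Fin n)) : ℝ :=
  sSup (spectrum ℝ (distMatrix G))

/-- The smallest distance eigenvalue ∂ₙ. -/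
noncomputable def minDistEig {n : ℕ} (G : SimpleGraph (Fin n)) : ℝ :=
  sInf (spectrum ℝ (distMatrix G))

namespace ProxAux

open Matrix

section Spectral

variable {n : Type*} [Fintype n] [DecidableEq n] {A : Matrix n n ℝ} (hA : A.IsHermitian)

lemma UUstar :
    (hA.eigenvectorUnitary : Matrix n n ℝ) * star (hA.eigenvectorUnitary : Matrix n n ℝ) = 1 :=
  Matrix.mem_unitaryGroup_iff.mp hA.eigenvectorUnitary.2

lemma trace_eq_sum_eig : Matrix.trace A = ∑ i, hA.eigenvalues i := by
  nth_rewrite 1 [hA.spectral_theorem]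
  rw [Unitary.conjStarAlgAut_apply, Matrix.trace_mul_cycle, Unitary.coe_star_mul_self, one_mul, Matrix.trace_diagonal]
  simp

lemma sq_sum_y (x : n → ℝ) :
    (star (hA.eigenvectorUnitary : Matrix n n ℝ) *ᵥ x) ⬝ᵥ
      (star (hA.eigenvectorUnitary : Matrix n n ℝ) *ᵥ x) = x ⬝ᵥ x := by
  set U := (hA.eigenvectorUnitary : Matrix n n ℝ)
  have hU : star U = Uᵀ := by simp [Matrix.star_eq_conjTranspose]
  rw [hU, Matrix.dotProduct_mulVec, Matrix.vecMul_transpose,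
    Matrix.mulVec_mulVec, ← hU, UUstar hA, Matrix.one_mulVec]

lemma quad_form_eq (x : n → ℝ) :
    x ⬝ᵥ (A *ᵥ x) = ∑ i, hA.eigenvalues i *
      ((star (hA.eigenvectorUnitary : Matrix n n ℝ) *ᵥ x) i) ^ 2 := by
  set U := (hA.eigenvectorUnitary : Matrix n n ℝ) with hUdef
  have hU : star U = Uᵀ := by simp [Matrix.star_eq_conjTranspose]
  set y := star U *ᵥ x with hy
  nth_rewrite 1 [hA.spectral_theorem]
  rw [Unitary.conjStarAlgAut_apply, ← Matrix.mulVec_mulVec, ← Matrix.mulVec_mulVec, ← hUdef, ← hy]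
  rw [Matrix.dotProduct_mulVec, ← Matrix.mulVec_transpose, ← hU, ← hy]
  have hdiag : (Matrix.diagonal (RCLike.ofReal ∘ hA.eigenvalues) : Matrix n n ℝ) *ᵥ y
      = fun i => hA.eigenvalues i * y i := by
    ext i
    simp [Matrix.mulVec_diagonal]
  rw [hdiag]
  simp only [dotProduct]
  exact Finset.sum_congr rfl fun i _ => by ring

lemma U_mulVec_y (x : n → ℝ) :
    (hA.eigenvectorUnitary : Matrix n n ℝ) *ᵥ
      (star (hA.eigenvectorUnitary : Matrix n n ℝ) *ᵥ x) = x := by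
  rw [Matrix.mulVec_mulVec, UUstar hA, Matrix.one_mulVec]

lemma entry_formula (u v : n) :
    A u v = ∑ i, hA.eigenvalues i * (hA.eigenvectorUnitary : Matrix n n ℝ) u i
      * (hA.eigenvectorUnitary : Matrix n n ℝ) v i := by
  set U := (hA.eigenvectorUnitary : Matrix n n ℝ) with hUdef
  nth_rewrite 1 [hA.spectral_theorem]
  rw [Unitary.conjStarAlgAut_apply, Matrix.mul_assoc, Matrix.mul_apply]
  refine Finset.sum_congr rfl fun i _ => ?_
  rw [Matrix.diagonal_mul]
  have : (star U) i v = U v i := by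
    simp [Matrix.star_eq_conjTranspose, Matrix.conjTranspose_apply]
  rw [this]
  show U u i * ((RCLike.ofReal ∘ hA.eigenvalues) i * U v i) = _
  simp only [Function.comp_apply, RCLike.ofReal_real_eq_id, id_eq]
  ring

lemma U_mul_Ut (u v : n) :
    ∑ i, (hA.eigenvectorUnitary : Matrix n n ℝ) u i * (hA.eigenvectorUnitary : Matrix n n ℝ) v i
      = (1 : Matrix n n ℝ) u v := by
  set U := (hA.eigenvectorUnitary : Matrix n n ℝ) with hUdef
  rw [← UUstar hA, Matrix.mul_apply]
  refine Finset.sum_congr rfl fun i _ => ?_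
  have : (star U) i v = U v i := by
    simp [Matrix.star_eq_conjTranspose, Matrix.conjTranspose_apply]
  rw [this]

end Spectral

section GraphFacts

variable {n : ℕ} (G : SimpleGraph (Fin n))

lemma distMatrix_isHermitian : (distMatrix G).IsHermitian := by
  show (distMatrix G)ᴴ = distMatrix G
  ext u v
  simp [distMatrix, Matrix.conjTranspose_apply, SimpleGraph.dist_comm]

lemma trace_distMatrix : Matrix.trace (distMatrix G) = 0 := by
  simp [Matrix.trace, Matrix.diag, distMatrix, SimpleGraph.dist_self]

lemma prox_eq (v₀ : Fin n) (hv₀ : ∀ v, transmission G v₀ ≤ transmission G v) :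
    proximity G = (transmission G v₀ : ℝ) / ((n : ℝ) - 1) := by
  have hset : {x : ℝ | ∃ v : Fin n, x = transmission G v}
      = Set.range (fun v : Fin n => (transmission G v : ℝ)) := by
    ext x; simp [eq_comm]
  have : sInf {x : ℝ | ∃ v : Fin n, x = transmission G v} = (transmission G v₀ : ℝ) := by
    rw [hset]
    refine le_antisymm (csInf_le (Set.finite_range _).bddBelow ⟨v₀, rfl⟩) ?_
    refine le_csInf ⟨_, ⟨v₀, rfl⟩⟩ ?_
    rintro x ⟨v, rfl⟩
    simpa using (Nat.cast_le (α := ℝ)).mpr (hv₀ v)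
  rw [proximity, this]

lemma sum_transmission :
    (fun _ => (1:ℝ)) ⬝ᵥ (distMatrix G *ᵥ fun _ => (1:ℝ)) = ∑ v, (transmission G v : ℝ) := by
  simp [dotProduct, Matrix.mulVec, distMatrix, transmission]

end GraphFacts

section Top

variable {n : ℕ}

lemma top_dist (hn : 2 ≤ n) (u v : Fin n) :
    (⊤ : SimpleGraph (Fin n)).dist u v = if u = v then 0 else 1 := by
  split_ifs with h
  · simp [h]
  · exact SimpleGraph.dist_eq_one_iff_adj.mpr (by simpa using h)

lemma top_transmission (hn : 2 ≤ n) (v : Fin n) :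
    transmission (⊤ : SimpleGraph (Fin n)) v = n - 1 := by
  unfold transmission
  rw [← Finset.sum_erase_add _ _ (mem_univ v)]
  rw [top_dist hn v v, if_pos rfl, add_zero]
  rw [Finset.sum_congr rfl (fun u hu => by
    rw [top_dist hn v u, if_neg (Ne.symm (Finset.ne_of_mem_erase hu))])]
  simp [Finset.card_erase_of_mem]

lemma top_proximity (hn : 2 ≤ n) : proximity (⊤ : SimpleGraph (Fin n)) = 1 := by
  have h0 : 0 < n := by omega
  have : Nonempty (Fin n) := ⟨⟨0, h0⟩⟩
  rw [prox_eq (⊤ : SimpleGraph (Fin n)) (Classical.arbitrary _)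
    (fun v => by rw [top_transmission hn, top_transmission hn])]
  rw [top_transmission hn]
  rw [Nat.cast_sub (by omega)]
  rw [Nat.cast_one, div_self]
  have : (2:ℝ) ≤ (n:ℝ) := by exact_mod_cast hn
  linarith

lemma top_minDistEig (hn : 2 ≤ n) : minDistEig (⊤ : SimpleGraph (Fin n)) = -1 := by
  have h0 : 0 < n := by omega
  have : Nonempty (Fin n) := ⟨⟨0, h0⟩⟩
  set G : SimpleGraph (Fin n) := ⊤ with hGdef
  set D := distMatrix G with hDdef
  have hD : D.IsHermitian := distMatrix_isHermitian G
  set ev := hD.eigenvalues with hevdef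
  have hDif : ∀ u v, D u v = if u = v then 0 else 1 := by
    intro u v
    rw [hDdef]
    show ((G.dist u v : ℕ) : ℝ) = _
    rw [hGdef, top_dist hn]
    split_ifs <;> simp
  -- every eigenvalue is at least -1
  have hlower : ∀ i, -1 ≤ ev i := by
    intro i
    set w : Fin n → ℝ := ⇑(hD.eigenvectorBasis i) with hw
    have hmul : D *ᵥ w = ev i • w := hD.mulVec_eigenvectorBasis i
    have hnorm : ∑ u, w u ^ 2 = 1 := by
      have h1 : ‖hD.eigenvectorBasis i‖ = 1 := hD.eigenvectorBasis.orthonormal.1 i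
      rw [EuclideanSpace.norm_eq] at h1
      have := Real.sqrt_eq_one.mp h1
      simpa [sq_abs] using this
    have hQ1 : w ⬝ᵥ (D *ᵥ w) = ev i := by
      rw [hmul]
      simp only [dotProduct, Pi.smul_apply, smul_eq_mul]
      rw [show ∑ u, w u * (ev i * w u) = ev i * ∑ u, w u ^ 2 by
        rw [Finset.mul_sum]; exact Finset.sum_congr rfl fun u _ => by ring]
      rw [hnorm, mul_one]
    have key : ∀ u : Fin n, ∑ v, w u * D u v * w v = w u * (∑ v, w v) - w u ^ 2 := by
      intro u
      have hterm : ∀ v, w u * D u v * w v = w u * w v - (if u = v then w u * w v else 0) := by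
        intro v; rw [hDif u v]; split_ifs <;> ring
      rw [Finset.sum_congr rfl fun v _ => hterm v, Finset.sum_sub_distrib,
        Finset.sum_ite_eq univ u (fun v => w u * w v), if_pos (mem_univ u), ← Finset.mul_sum]
      ring
    have hQ2 : w ⬝ᵥ (D *ᵥ w) = (∑ u, w u) ^ 2 - 1 := by
      have h1 : w ⬝ᵥ (D *ᵥ w) = ∑ u, ∑ v, w u * D u v * w v := by
        simp only [dotProduct, Matrix.mulVec, Finset.mul_sum]
        exact Finset.sum_congr rfl fun u _ => Finset.sum_congr rfl fun v _ => by ring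
      rw [h1, Finset.sum_congr rfl fun u _ => key u, Finset.sum_sub_distrib, ← Finset.sum_mul,
        hnorm]
      ring
    nlinarith [hQ1.symm.trans hQ2, sq_nonneg (∑ u, w u)]
  -- -1 is an eigenvalue
  have hmem : (-1 : ℝ) ∈ spectrum ℝ D := by
    rw [spectrum.mem_iff]
    intro hunit
    have hdet := (Matrix.isUnit_iff_isUnit_det _).mp hunit
    have hNentry : ∀ u v, ((algebraMap ℝ (Matrix (Fin n) (Fin n) ℝ)) (-1) - D) u v = -1 := by
      intro u v
      rw [Matrix.sub_apply, Matrix.algebraMap_matrix_apply, hDif u v]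
      split_ifs <;> simp
    have h01 : ((⟨0, by omega⟩ : Fin n) : Fin n) ≠ ⟨1, by omega⟩ := by
      intro h; simpa using congrArg Fin.val h
    have hdet0 : ((algebraMap ℝ (Matrix (Fin n) (Fin n) ℝ)) (-1) - D).det = 0 := by
      apply Matrix.det_zero_of_row_eq h01
      funext v; rw [hNentry, hNentry]
    rw [hdet0] at hdet
    exact not_isUnit_zero hdet
  have hsp : spectrum ℝ D = Set.range ev := hD.spectrum_real_eq_range_eigenvalues
  rw [hsp] at hmem
  obtain ⟨i₂, hi₂⟩ := hmem
  show sInf (spectrum ℝ D) = -1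
  rw [hsp]
  refine le_antisymm (csInf_le (Set.finite_range _).bddBelow ⟨i₂, hi₂⟩) ?_
  refine le_csInf (Set.range_nonempty _) ?_
  rintro x ⟨i, rfl⟩
  exact hlower i

end Top

end ProxAux

open ProxAux Matrix in
theorem proximity_add_minDistEig {n : ℕ} (hn : 4 ≤ n) (G : SimpleGraph (Fin n))
    (hG : G.Connected) :
    proximity G + minDistEig G ≤ 0 ∧ (proximity G + minDistEig G = 0 ↔ G = ⊤) := by
  classical
  have h0 : 0 < n := by omega
  have : Nonempty (Fin n) := ⟨⟨0, h0⟩⟩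
  have hnR : (4:ℝ) ≤ (n:ℝ) := by exact_mod_cast hn
  have hn1 : (0:ℝ) < (n:ℝ) - 1 := by linarith
  have hnpos : (0:ℝ) < (n:ℝ) := by linarith
  set D := distMatrix G with hDdef
  have hD : D.IsHermitian := distMatrix_isHermitian G
  set ev := hD.eigenvalues with hevdef
  set U := (hD.eigenvectorUnitary : Matrix (Fin n) (Fin n) ℝ) with hUdef
  set one : Fin n → ℝ := fun _ => 1 with honedef
  set y : Fin n → ℝ := star U *ᵥ one with hydef
  obtain ⟨v₀, -, hv₀⟩ := Finset.exists_min_image univ (transmission G) univ_nonempty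
  have hv₀' : ∀ v, transmission G v₀ ≤ transmission G v := fun v => hv₀ v (mem_univ v)
  set T : ℝ := (transmission G v₀ : ℝ) with hTdef
  obtain ⟨i₀, -, hi₀⟩ := Finset.exists_max_image univ ev univ_nonempty
  obtain ⟨i₁, -, hi₁⟩ := Finset.exists_min_image univ ev univ_nonempty
  set M := ev i₀ with hMdef
  set m := ev i₁ with hmdef
  have hi₀' : ∀ i, ev i ≤ M := fun i => hi₀ i (mem_univ i)
  have hi₁' : ∀ i, m ≤ ev i := fun i => hi₁ i (mem_univ i)
  have hsp : spectrum ℝ D = Set.range ev := hD.spectrum_real_eq_range_eigenvalues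
  have hmin : minDistEig G = m := by
    show sInf (spectrum ℝ D) = m
    rw [hsp]
    exact le_antisymm (csInf_le (Set.finite_range _).bddBelow ⟨i₁, rfl⟩)
      (le_csInf (Set.range_nonempty _) (by rintro x ⟨i, rfl⟩; exact hi₁' i))
  have hprox : proximity G = T / ((n:ℝ) - 1) := prox_eq G v₀ hv₀'
  have htr : ∑ i, ev i = 0 := by
    rw [hevdef, ← trace_eq_sum_eig hD]; exact trace_distMatrix G
  have hQ : one ⬝ᵥ (D *ᵥ one) = ∑ i, ev i * (y i) ^ 2 := by
    rw [hydef, hUdef, hevdef]; exact quad_form_eq hD one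
  have hS : one ⬝ᵥ (D *ᵥ one) = ∑ v, (transmission G v : ℝ) := sum_transmission G
  have hY : ∑ i, (y i) ^ 2 = (n:ℝ) := by
    have h1 := sq_sum_y hD one
    rw [← hUdef, ← hydef] at h1
    simp only [dotProduct, honedef, mul_one] at h1
    rw [show ∑ i, y i ^ 2 = ∑ i, y i * y i from Finset.sum_congr rfl fun i _ => (pow_two _)]
    rw [h1]
    simp
  have hTle : (n:ℝ) * T ≤ ∑ v, (transmission G v : ℝ) := by
    have h1 : ∀ v ∈ univ, T ≤ ((transmission G v : ℕ) : ℝ) := fun v _ => by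
      rw [hTdef]; exact_mod_cast hv₀' v
    have h2 := Finset.card_nsmul_le_sum univ (fun v => ((transmission G v : ℕ) : ℝ)) T h1
    simpa [nsmul_eq_mul, Finset.card_univ] using h2
  have hQM : ∑ i, ev i * y i ^ 2 ≤ M * (n:ℝ) := by
    calc ∑ i, ev i * y i ^ 2 ≤ ∑ i, M * y i ^ 2 :=
          Finset.sum_le_sum fun i _ => mul_le_mul_of_nonneg_right (hi₀' i) (sq_nonneg _)
      _ = M * (n:ℝ) := by rw [← Finset.mul_sum, hY]
  have hcast : ((n - 1 : ℕ) : ℝ) = (n:ℝ) - 1 := by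
    rw [Nat.cast_sub (by omega)]; simp
  have hMm : M + ((n:ℝ) - 1) * m ≤ 0 := by
    have h1 := Finset.card_nsmul_le_sum (univ.erase i₀) ev m (fun i _ => hi₁' i)
    have h2 : ∑ i ∈ univ.erase i₀, ev i + ev i₀ = 0 := by
      rw [Finset.sum_erase_add univ ev (mem_univ i₀)]; exact htr
    have hcard : (univ.erase i₀).card = n - 1 := by
      rw [Finset.card_erase_of_mem (mem_univ i₀), Finset.card_univ, Fintype.card_fin]
    rw [hcard, nsmul_eq_mul, hcast] at h1
    rw [hMdef]
    linarith
  have hnT : (n:ℝ) * T ≤ M * (n:ℝ) := by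
    rw [← hS] at hTle
    rw [hQ] at hTle
    exact hTle.trans hQM
  have hTM : T ≤ M := by
    have := (mul_le_mul_iff_right₀ hnpos).mp (by linarith : (n:ℝ) * T ≤ (n:ℝ) * M)
    exact this
  have hineq : proximity G + minDistEig G ≤ 0 := by
    rw [hprox, hmin]
    have h2 : T / ((n:ℝ) - 1) ≤ -m := by
      rw [div_le_iff₀ hn1]; linarith
    linarith
  refine ⟨hineq, ⟨fun heq => ?_, fun htop => by
    rw [htop, top_proximity (by omega : 2 ≤ n), top_minDistEig (by omega : 2 ≤ n)]; ring⟩⟩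
  -- forward direction: equality implies complete graph
  rw [hprox, hmin] at heq
  have hTeq : T = ((n:ℝ) - 1) * (-m) := by
    have : T / ((n:ℝ) - 1) = -m := by linarith
    rw [← this]; field_simp
  -- T > 0
  have ha : (⟨0, by omega⟩ : Fin n) ≠ (⟨1, by omega⟩ : Fin n) := by
    intro h; simpa using congrArg Fin.val h
  have hTpos : (0:ℝ) < T := by
    set a : Fin n := ⟨0, by omega⟩
    set b : Fin n := ⟨1, by omega⟩
    have u₁ : Fin n := if v₀ = a then b else a
    have hne : v₀ ≠ (if v₀ = a then b else a) := by
      split_ifs with h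
      · rw [h]; exact ha
      · exact h
    have hd : 0 < G.dist v₀ (if v₀ = a then b else a) := hG.pos_dist_of_ne hne
    have hle : G.dist v₀ (if v₀ = a then b else a) ≤ transmission G v₀ :=
      Finset.single_le_sum (fun u _ => Nat.zero_le _) (mem_univ _)
    have : 0 < transmission G v₀ := lt_of_lt_of_le hd hle
    rw [hTdef]
    exact_mod_cast this
  have hm0 : m < 0 := by nlinarith
  have hMeq : M + ((n:ℝ) - 1) * m = 0 := by
    have : ((n:ℝ) - 1) * (-m) ≤ M := hTeq ▸ hTM
    linarith
  have hMpos : 0 < M := by nlinarith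
  have hQeq : ∑ i, ev i * y i ^ 2 = M * (n:ℝ) := by
    have hM' : M = ((n:ℝ) - 1) * (-m) := by linarith
    have hlow : (n:ℝ) * T = M * (n:ℝ) := by rw [hTeq, hM']; ring
    refine le_antisymm hQM ?_
    rw [← hlow, ← hQ, hS]
    exact hTle
  -- step A : eigenvalue or zero coordinate
  have stepA : ∀ i, ev i = M ∨ y i = 0 := by
    have hzero : ∑ i, (M - ev i) * y i ^ 2 = 0 := by
      have : ∑ i, (M - ev i) * y i ^ 2 = M * (n:ℝ) - ∑ i, ev i * y i ^ 2 := by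
        rw [← hY, Finset.mul_sum, ← Finset.sum_sub_distrib]
        exact Finset.sum_congr rfl fun i _ => by ring
      rw [this, hQeq]; ring
    intro i
    have h1 := (Finset.sum_eq_zero_iff_of_nonneg (fun i _ =>
      mul_nonneg (by linarith [hi₀' i] : (0:ℝ) ≤ M - ev i) (sq_nonneg _))).mp hzero i (mem_univ i)
    rcases mul_eq_zero.mp h1 with h | h
    · left; linarith
    · right; exact sq_eq_zero_iff.mp h
  -- step B : all non-top eigenvalues equal m
  have stepB : ∀ i, i ≠ i₀ → ev i = m := by
    have h2 : ∑ i ∈ univ.erase i₀, ev i + ev i₀ = 0 := by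
      rw [Finset.sum_erase_add univ ev (mem_univ i₀)]; exact htr
    have hcard : (univ.erase i₀).card = n - 1 := by
      rw [Finset.card_erase_of_mem (mem_univ i₀), Finset.card_univ, Fintype.card_fin]
    have hzero : ∑ i ∈ univ.erase i₀, (ev i - m) = 0 := by
      rw [Finset.sum_sub_distrib, Finset.sum_const, hcard, nsmul_eq_mul, hcast]
      rw [hMdef] at hMeq
      linarith
    intro i hi
    have h1 := (Finset.sum_eq_zero_iff_of_nonneg (fun j _ =>
      by linarith [hi₁' j] : ∀ j ∈ univ.erase i₀, (0:ℝ) ≤ ev j - m)).mp hzero i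
      (Finset.mem_erase.mpr ⟨hi, mem_univ i⟩)
    linarith
  have hMne : m ≠ M := by linarith
  -- step C : y vanishes off i₀
  have stepC : ∀ i, i ≠ i₀ → y i = 0 := by
    intro i hi
    rcases stepA i with h | h
    · exact absurd (h ▸ stepB i hi).symm hMne
    · exact h
  -- step D : U v i₀ * y i₀ = 1
  have hone : U *ᵥ y = one := by
    rw [hydef, hUdef]; exact U_mulVec_y hD one
  have stepD : ∀ v, U v i₀ * y i₀ = 1 := by
    intro v
    have h1 : (U *ᵥ y) v = 1 := by rw [hone]
    rw [Matrix.mulVec, dotProduct] at h1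
    rwa [Finset.sum_eq_single i₀ (fun i _ hi => by rw [stepC i hi, mul_zero])
      (fun h => absurd (mem_univ i₀) h)] at h1
  have hy₀ : y i₀ ≠ 0 := by
    intro h
    have := stepD ⟨0, by omega⟩
    rw [h, mul_zero] at this
    exact zero_ne_one this
  have hUconst : ∀ v, U v i₀ = 1 / y i₀ := by
    intro v
    field_simp
    exact stepD v
  -- entries of D
  have hentry : ∀ u v : Fin n, D u v = (M - m) * (U u i₀ * U v i₀)
      + m * ((1 : Matrix (Fin n) (Fin n) ℝ) u v) := by
    intro u v
    have he : D u v = ∑ i, ev i * U u i * U v i := by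
      rw [hevdef, hUdef]; exact entry_formula hD u v
    have h3 : ∑ i, ev i * U u i * U v i
        = ∑ i, ((ev i - m) * (U u i * U v i)) + m * ∑ i, U u i * U v i := by
      rw [Finset.mul_sum, ← Finset.sum_add_distrib]
      exact Finset.sum_congr rfl fun i _ => by ring
    have h4 : ∑ i, ((ev i - m) * (U u i * U v i)) = (M - m) * (U u i₀ * U v i₀) := by
      rw [Finset.sum_eq_single i₀ (fun i _ hi => by rw [stepB i hi]; ring)
        (fun h => absurd (mem_univ i₀) h)]
    have h5 : ∑ i, U u i * U v i = (1 : Matrix (Fin n) (Fin n) ℝ) u v := by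
      rw [hUdef]; exact U_mul_Ut hD u v
    rw [he, h3, h4, h5]
  set c : ℝ := (M - m) * ((1 / y i₀) * (1 / y i₀)) with hcdef
  have hdiag : ∀ u : Fin n, (0:ℝ) = c + m := by
    intro u
    have h1 := hentry u u
    rw [hUconst u, Matrix.one_apply_eq] at h1
    have h2 : D u u = 0 := by
      show ((G.dist u u : ℕ) : ℝ) = 0
      simp [SimpleGraph.dist_self]
    rw [h2] at h1
    rw [h1, hcdef]; ring
  have hoffdiag : ∀ u v : Fin n, u ≠ v → D u v = -m := by
    intro u v huv
    have h1 := hentry u v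
    rw [hUconst u, hUconst v, Matrix.one_apply_ne huv, mul_zero, add_zero] at h1
    have h6 := hdiag u
    rw [h1, ← hcdef]
    linarith
  -- an edge exists, so -m = 1
  obtain ⟨p⟩ := hG.preconnected ⟨0, by omega⟩ ⟨1, by omega⟩
  have hadj : G.Adj ⟨0, by omega⟩ (p.getVert 1) :=
    p.adj_snd (SimpleGraph.Walk.not_nil_of_ne ha)
  have hd1 : D ⟨0, by omega⟩ (p.getVert 1) = 1 := by
    show ((G.dist _ _ : ℕ) : ℝ) = 1
    rw [SimpleGraph.dist_eq_one_iff_adj.mpr hadj]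
    simp
  have hm1 : m = -1 := by
    have := hoffdiag _ _ hadj.ne
    rw [hd1] at this
    linarith
  -- all distances are 1, so G is complete
  ext u v
  simp only [SimpleGraph.top_adj]
  constructor
  · exact fun h => h.ne
  · intro huv
    have h1 := hoffdiag u v huv
    rw [hm1] at h1
    have h2 : G.dist u v = 1 := by
      have hcast1 : ((G.dist u v : ℕ) : ℝ) = - - 1 := h1
      have : ((G.dist u v : ℕ) : ℝ) = 1 := by rw [hcast1]; ring
      exact_mod_cast this
    exact SimpleGraph.dist_eq_one_iff_adj.mp h2
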